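/- For every n ∈ ℕ and every θ ∈ ℝ, the Legendre polynomial evaluated at cos θ has the finite trigonometric expansion P_n(cos θ) = ∑_{q=0}^{n} F̃_{q,n} · cos((n - 2q)·θ). -/

import Mathlib

noncomputable section

/-- the Legendre polynomial P_n(ξ) = ∑_{k=0}^{⌊n/2⌋} p_{n,k} ξ^{n-2k} -/
def legP (n : ℕ) (ξ : ℝ) : ℝ :=
  ∑ k ∈ Finset.range (n / 2 + 1),
    ((-1 : ℝ) ^ k / 2 ^ n) * (Nat.factorial (2 * n - 2 * k) : ℝ) /
      ((Nat.factorial k : ℝ) * (Nat.factorial (n - k) : ℝ) * (Nat.factorial (n - 2 * k) : ℝ)) *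
      ξ ^ (n - 2 * k)

/-- F̃_{q,n} = (2q)!(2n-2q)! / (2^{2n} (q!)² ((n-q)!)²) -/
def Ftil (q n : ℕ) : ℝ :=
  ((Nat.factorial (2 * q) : ℝ) * (Nat.factorial (2 * n - 2 * q) : ℝ)) /
    (2 ^ (2 * n) * (Nat.factorial q : ℝ) ^ 2 * (Nat.factorial (n - q) : ℝ) ^ 2)

/-! ### Auxiliary definitions and lemmas -/

private def Aterm (q m k : ℕ) : ℝ :=
  (-4 : ℝ) ^ k * (Nat.factorial (2 * (q + m - k)) : ℝ) /
    ((Nat.factorial k : ℝ) * (Nat.factorial (q + m - k) : ℝ) * (Nat.factorial (q - k) : ℝ) *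
      (Nat.factorial (m - k) : ℝ))

private def Gterm (q m k : ℕ) : ℝ :=
  -2 * k * (2 * (q + m - k) + 1) * (-4 : ℝ) ^ k * (Nat.factorial (2 * (q + m - k)) : ℝ) /
    ((Nat.factorial k : ℝ) * (Nat.factorial (q + m - k) : ℝ) * (Nat.factorial (q + 1 - k) : ℝ) *
      (Nat.factorial (m - k) : ℝ))

private lemma fac_cast_ne (a : ℕ) : ((Nat.factorial a : ℝ)) ≠ 0 := by
  exact_mod_cast Nat.factorial_ne_zero a

private lemma fac1 (a : ℕ) :
    ((Nat.factorial (a+1) : ℝ)) = ((a:ℝ)+1) * (Nat.factorial a : ℝ) := by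
  rw [Nat.factorial_succ]; push_cast; ring

private lemma fac2 (a : ℕ) :
    ((Nat.factorial (a+2) : ℝ)) = ((a:ℝ)+2) * ((a:ℝ)+1) * (Nat.factorial a : ℝ) := by
  have h : a + 2 = (a+1) + 1 := by ring
  rw [h, fac1, fac1]; push_cast; ring

private lemma fac4 (a : ℕ) : ((Nat.factorial (a+4) : ℝ))
    = ((a:ℝ)+4) * ((a:ℝ)+3) * ((a:ℝ)+2) * ((a:ℝ)+1) * (Nat.factorial a : ℝ) := by
  have h : a + 4 = (a+2) + 2 := by ring
  rw [h, fac2, fac2]; push_cast; ring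

/-- Zeilberger-style certificate for the key combinatorial identity. -/
private lemma cert (q m k : ℕ) (hk : k ≤ q) (hm : q < m) :
    (q + 1 : ℝ) * Aterm (q+1) m k
      = 2 * (2 * q + 1) * Aterm q m k + Gterm q m (k+1) - Gterm q m k := by
  obtain ⟨i, rfl⟩ : ∃ i, q = k + i := ⟨q - k, by omega⟩
  obtain ⟨j, rfl⟩ : ∃ j, m = k + i + 1 + j := ⟨m - (k + i) - 1, by omega⟩
  simp only [Aterm, Gterm]
  have e1 : 2 * (k + i + 1 + (k + i + 1 + j) - k) = (2*k + 4*i + 2*j) + 4 := by omega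
  have e2 : 2 * (k + i + (k + i + 1 + j) - k) = (2*k + 4*i + 2*j) + 2 := by omega
  have e3 : 2 * (k + i + (k + i + 1 + j) - (k+1)) = (2*k + 4*i + 2*j) := by omega
  have f1 : k + i + 1 + (k + i + 1 + j) - k = (k + 2*i + j) + 2 := by omega
  have f2 : k + i + (k + i + 1 + j) - k = (k + 2*i + j) + 1 := by omega
  have f3 : k + i + (k + i + 1 + j) - (k+1) = (k + 2*i + j) := by omega
  have g1 : k + i + 1 - k = i + 1 := by omega
  have g2 : k + i - k = i := by omega
  have g3 : k + i + 1 - (k+1) = i := by omega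
  have h1 : k + i + 1 + j - k = (i + j) + 1 := by omega
  have h2 : k + i + 1 + j - (k+1) = i + j := by omega
  rw [e1, e2, e3, f1, f2, f3, g1, g2, g3, h1, h2]
  rw [fac4 (2*k + 4*i + 2*j), fac2 (2*k + 4*i + 2*j), fac2 (k + 2*i + j), fac1 (k + 2*i + j),
    fac1 i, fac1 (i+j), fac1 k, pow_succ]
  field_simp
  push_cast; ring

private lemma boundary (q m : ℕ) (hm : q < m) :
    (q + 1 : ℝ) * Aterm (q+1) m (q+1) = - Gterm q m (q+1) := by
  obtain ⟨j, rfl⟩ : ∃ j, m = q + 1 + j := ⟨m - q - 1, by omega⟩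
  simp only [Aterm, Gterm]
  have e1 : 2 * (q + 1 + (q + 1 + j) - (q+1)) = (2*q + 2*j) + 2 := by omega
  have e2 : 2 * (q + (q + 1 + j) - (q+1)) = 2*q + 2*j := by omega
  have f1 : q + 1 + (q + 1 + j) - (q+1) = (q + j) + 1 := by omega
  have f2 : q + (q + 1 + j) - (q+1) = q + j := by omega
  have g1 : q + 1 - (q+1) = 0 := by omega
  have h1 : q + 1 + j - (q+1) = j := by omega
  rw [e1, e2, f1, f2, g1, h1]
  rw [fac2 (2*q + 2*j), fac1 (q + j), fac1 q]
  field_simp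
  push_cast; ring

private lemma G_zero (q m : ℕ) : Gterm q m 0 = 0 := by simp [Gterm]

private lemma sumA_of_le : ∀ q m : ℕ, q ≤ m →
    ∑ k ∈ Finset.range (q+1), Aterm q m k
      = (Nat.factorial (2*q) : ℝ) * (Nat.factorial (2*m) : ℝ) /
        ((Nat.factorial q : ℝ)^2 * (Nat.factorial m : ℝ)^2) := by
  intro q
  induction q with
  | zero =>
    intro m _
    simp [Aterm]
    ring
  | succ q ih =>
    intro m hm
    have hm' : q < m := by omega
    have hq1 : ((q:ℝ) + 1) ≠ 0 := by positivity
    refine mul_left_cancel₀ hq1 ?_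
    have step : ∀ k ∈ Finset.range (q+1), (q+1:ℝ) * Aterm (q+1) m k
        = 2 * (2*q+1) * Aterm q m k + (Gterm q m (k+1) - Gterm q m k) := by
      intro k hk
      rw [cert q m k (Nat.lt_succ_iff.mp (Finset.mem_range.mp hk)) hm']
      ring
    calc ((q:ℝ)+1) * ∑ k ∈ Finset.range (q+1+1), Aterm (q+1) m k
        = (∑ k ∈ Finset.range (q+1), ((q:ℝ)+1) * Aterm (q+1) m k)
            + ((q:ℝ)+1) * Aterm (q+1) m (q+1) := by
          rw [Finset.sum_range_succ, mul_add, Finset.mul_sum]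
      _ = (∑ k ∈ Finset.range (q+1), (2 * (2*(q:ℝ)+1) * Aterm q m k))
            + (∑ k ∈ Finset.range (q+1), (Gterm q m (k+1) - Gterm q m k))
            + ((q:ℝ)+1) * Aterm (q+1) m (q+1) := by
          rw [Finset.sum_congr rfl step, Finset.sum_add_distrib]
      _ = 2 * (2*(q:ℝ)+1) * (∑ k ∈ Finset.range (q+1), Aterm q m k)
            + (Gterm q m (q+1) - Gterm q m 0) + (- Gterm q m (q+1)) := by
          rw [Finset.sum_range_sub (Gterm q m), boundary q m hm', ← Finset.mul_sum]
      _ = 2 * (2*(q:ℝ)+1) *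
            ((Nat.factorial (2*q) : ℝ) * (Nat.factorial (2*m) : ℝ) /
              ((Nat.factorial q : ℝ)^2 * (Nat.factorial m : ℝ)^2)) := by
          rw [ih m (le_of_lt hm'), G_zero]; ring
      _ = ((q:ℝ)+1) * ((Nat.factorial (2*(q+1)) : ℝ) * (Nat.factorial (2*m) : ℝ) /
            ((Nat.factorial (q+1) : ℝ)^2 * (Nat.factorial m : ℝ)^2)) := by
          have h2 : 2*(q+1) = 2*q + 2 := by ring
          rw [h2, fac2 (2*q), fac1 q]
          field_simp
          push_cast; ring

private lemma Aterm_symm (q m k : ℕ) : Aterm q m k = Aterm m q k := by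
  simp only [Aterm]; rw [add_comm m q]; ring

private lemma sumA (q m : ℕ) :
    ∑ k ∈ Finset.range (min q m + 1), Aterm q m k
      = (Nat.factorial (2*q) : ℝ) * (Nat.factorial (2*m) : ℝ) /
        ((Nat.factorial q : ℝ)^2 * (Nat.factorial m : ℝ)^2) := by
  rcases le_total q m with h | h
  · rw [min_eq_left h]; exact sumA_of_le q m h
  · rw [min_eq_right h, Finset.sum_congr rfl fun k _ => Aterm_symm q m k, sumA_of_le m q h]
    ring

private lemma cos_pow_expand (θ : ℝ) (m : ℕ) :
    Real.cos θ ^ m =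
      ∑ j ∈ Finset.range (m + 1),
        (m.choose j : ℝ) / 2 ^ m * Real.cos ((2 * j - m : ℝ) * θ) := by
  have hz : ∀ (x : ℝ) (a : ℕ), Complex.exp (x * Complex.I) ^ a
      = Complex.exp ((a * x : ℝ) * Complex.I) := by
    intro x a; rw [← Complex.exp_nat_mul]; push_cast; ring_nf
  have key : ((Real.cos θ : ℝ) : ℂ) ^ m =
      ∑ j ∈ Finset.range (m + 1),
        (((m.choose j : ℝ) / 2 ^ m : ℝ) : ℂ) *
          Complex.exp (((2 * j - m : ℝ) * θ : ℝ) * Complex.I) := by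
    have hc : (Real.cos θ : ℂ) =
        (Complex.exp (θ * Complex.I) + Complex.exp ((-θ : ℝ) * Complex.I)) / 2 := by
      rw [Complex.ofReal_cos]
      simp [Complex.cos]
    rw [hc, div_pow, add_pow, Finset.sum_div]
    refine Finset.sum_congr rfl fun j hj => ?_
    have hjm : j ≤ m := Nat.lt_succ_iff.mp (Finset.mem_range.mp hj)
    rw [hz, hz, ← Complex.exp_add]
    have he : ((j * θ : ℝ) : ℂ) * Complex.I + (((m - j : ℕ) * (-θ) : ℝ)) * Complex.I
        = (((2 * j - m : ℝ) * θ : ℝ)) * Complex.I := by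
      push_cast [Nat.cast_sub hjm]; ring
    rw [he]; push_cast; ring
  have h2 := congrArg Complex.re key
  rw [← Complex.ofReal_pow, Complex.ofReal_re, Complex.re_sum] at h2
  rw [h2]
  exact Finset.sum_congr rfl fun j _ => by
    rw [Complex.re_ofReal_mul, Complex.exp_ofReal_mul_I_re]

/-- the finite trigonometric expansion of the Legendre polynomial,
P_n(cos θ) = ∑_{q=0}^n F̃_{q,n} cos((n-2q)θ). -/
theorem legendre_cos_expansion (n : ℕ) (θ : ℝ) :
    legP n (Real.cos θ) =
      ∑ q ∈ Finset.range (n + 1), Ftil q n * Real.cos (((n : ℝ) - 2 * q) * θ) := by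
  have L1 : legP n (Real.cos θ) =
      ∑ x ∈ (Finset.range (n/2+1)).sigma (fun k => Finset.range (n - 2*k + 1)),
        ((-1 : ℝ) ^ x.1 / 2 ^ n) * (Nat.factorial (2 * n - 2 * x.1) : ℝ) /
          ((Nat.factorial x.1 : ℝ) * (Nat.factorial (n - x.1) : ℝ) *
            (Nat.factorial (n - 2 * x.1) : ℝ)) *
          (((n - 2*x.1).choose x.2 : ℝ) / 2 ^ (n - 2*x.1) *
            Real.cos ((2 * x.2 - (n - 2*x.1 : ℕ) : ℝ) * θ)) := by
    rw [legP, Finset.sum_sigma]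
    exact Finset.sum_congr rfl fun k _ => by rw [cos_pow_expand, Finset.mul_sum]
  have R1 : (∑ q ∈ Finset.range (n + 1), Ftil q n * Real.cos (((n : ℝ) - 2 * q) * θ)) =
      ∑ y ∈ (Finset.range (n+1)).sigma (fun q => Finset.range (min q (n - q) + 1)),
        (Aterm y.1 (n - y.1) y.2 / 4 ^ n) * Real.cos (((n : ℝ) - 2 * y.1) * θ) := by
    rw [Finset.sum_sigma]
    refine Finset.sum_congr rfl fun q hq => ?_
    rw [Finset.mem_range] at hq
    dsimp only
    rw [← Finset.sum_mul, ← Finset.sum_div, sumA q (n - q)]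
    have h1 : 2*(n-q) = 2*n - 2*q := by omega
    have h2 : (4:ℝ)^n = 2^(2*n) := by
      rw [show (4:ℝ) = 2^2 by norm_num, ← pow_mul]
    rw [Ftil, h1, h2]
    ring
  rw [L1, R1]
  refine Finset.sum_nbij' (fun x => ⟨n - x.1 - x.2, x.1⟩) (fun y => ⟨y.2, n - y.2 - y.1⟩)
    ?_ ?_ ?_ ?_ ?_
  · intro x hx
    simp only [Finset.mem_sigma, Finset.mem_range, Nat.lt_succ_iff, le_min_iff] at hx ⊢
    omega
  · intro y hy
    simp only [Finset.mem_sigma, Finset.mem_range, Nat.lt_succ_iff, le_min_iff] at hy ⊢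
    omega
  · intro x hx
    simp only [Finset.mem_sigma, Finset.mem_range, Nat.lt_succ_iff, le_min_iff] at hx
    ext <;> simp <;> omega
  · intro y hy
    simp only [Finset.mem_sigma, Finset.mem_range, Nat.lt_succ_iff, le_min_iff] at hy
    ext <;> simp <;> omega
  · intro x hx
    obtain ⟨k, j⟩ := x
    simp only [Finset.mem_sigma, Finset.mem_range, Nat.lt_succ_iff, le_min_iff] at hx
    obtain ⟨hk, hj⟩ := hx
    simp only
    have h2k : 2*k ≤ n := by omega
    have hkj : k + j ≤ n := by omega
    have hcos : ((2 * j - (n - 2*k : ℕ) : ℝ)) = ((n : ℝ) - 2 * ((n - k - j : ℕ) : ℝ)) := by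
      rw [Nat.cast_sub h2k, show n - k - j = n - (k+j) by omega, Nat.cast_sub hkj]
      push_cast; ring
    rw [hcos]
    have e1 : 2 * (n - k - j + (n - (n - k - j)) - k) = 2*n - 2*k := by omega
    have e2 : n - k - j + (n - (n - k - j)) - k = n - k := by omega
    have e3 : n - k - j - k = n - 2*k - j := by omega
    have e4 : n - (n - k - j) - k = j := by omega
    rw [Aterm, e1, e2, e3, e4]
    rw [Nat.cast_choose ℝ (show j ≤ n - 2*k by omega)]
    have q1 : (2:ℝ)^n = 2^(n-2*k) * 4^k := by
      rw [show (4:ℝ) = 2^2 by norm_num, ← pow_mul, ← pow_add]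
      congr 1; omega
    have p2 : (4:ℝ)^n = 2^n * 2^n := by rw [← mul_pow]; norm_num
    have p3 : (-4:ℝ)^k = (-1)^k * 4^k := by rw [← neg_one_mul, mul_pow]
    rw [p3, p2]
    simp only [q1]
    have h2 : (2:ℝ)^(n-2*k) ≠ 0 := by positivity
    have h4 : (4:ℝ)^k ≠ 0 := by positivity
    field_simp [fac_cast_ne]

end
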